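/- Let μ > −1/2 be real, λ ∈ ℂ, n ≥ 1, and let f : ℝ → ℂ be f(x) = H_n^μ(λx). Then for every x ≠ 0, (D_μ f)(x) = 2λn H_{n−1}^μ(λx). -/

import Mathlib

open MeasureTheory
open scoped BigOperators Nat

/-- Generalized factorial `γ_μ(n)`: `γ_μ(0) = 1`,
`γ_μ(n+1) = (n + 1 + 2μ θ_{n+1}) γ_μ(n)` where `θ_k = 1` if `k` is odd, `0` if even. -/
noncomputable def genGamma (μ : ℝ) : ℕ → ℝ
  | 0 => 1
  | n + 1 => ((n : ℝ) + 1 + 2 * μ * (if (n + 1) % 2 = 1 then (1 : ℝ) else 0)) * genGamma μ n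

/-- Generalized exponential function `e_μ(z) = Σ_{n≥0} z^n / γ_μ(n)`. -/
noncomputable def genExp (μ : ℝ) (z : ℂ) : ℂ :=
  ∑' n : ℕ, z ^ n / (genGamma μ n : ℂ)

/-- Generalized Hermite polynomial
`H_n^μ(x) = n! Σ_{k=0}^{⌊n/2⌋} (-1)^k (2x)^{n-2k} / (k! γ_μ(n-2k))`. -/
noncomputable def genHermite (μ : ℝ) (n : ℕ) (x : ℂ) : ℂ :=
  (n ! : ℂ) * ∑ k ∈ Finset.range (n / 2 + 1),
    (-1) ^ k * (2 * x) ^ (n - 2 * k) / ((k ! : ℂ) * ((genGamma μ (n - 2 * k) : ℝ) : ℂ))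

/-- Dunkl operator `(D_μ f)(x) = f'(x) + (μ/x)(f(x) - f(-x))`. -/
noncomputable def dunkl (μ : ℝ) (f : ℝ → ℂ) (x : ℝ) : ℂ :=
  deriv f x + ((μ / x : ℝ) : ℂ) * (f x - f (-x))

/-- Euler beta function `B(a,b) = Γ(a)Γ(b)/Γ(a+b)`. -/
noncomputable def realBeta (a b : ℝ) : ℝ :=
  Real.Gamma a * Real.Gamma b / Real.Gamma (a + b)

lemma genGamma_pos (μ : ℝ) (hμ : -(1/2) < μ) : ∀ n, 0 < genGamma μ n
  | 0 => one_pos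
  | n + 1 => by
    rw [genGamma]
    apply mul_pos _ (genGamma_pos μ hμ n)
    split <;> nlinarith [Nat.cast_nonneg (α := ℝ) n]

lemma hasDerivAt_monomial (c : ℂ) (m : ℕ) (x : ℝ) :
    HasDerivAt (fun y : ℝ => (c * y) ^ m) ((m : ℂ) * (c * x) ^ (m - 1) * c) x := by
  have h1 : HasDerivAt (fun z : ℂ => (c * z) ^ m) ((m : ℂ) * (c * x) ^ (m - 1) * c) (x : ℂ) := by
    have hp := hasDerivAt_pow m (c * (x : ℂ))
    have hm : HasDerivAt (fun z : ℂ => c * z) c (x : ℂ) := by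
      simpa using (hasDerivAt_id (x : ℂ)).const_mul c
    exact hp.comp _ hm
  exact h1.comp_ofReal

lemma cancel_lemma (A g K x c N P μ m s : ℂ) (hA : A ≠ 0) (hg : g ≠ 0) (hK : K ≠ 0)
    (hx : x ≠ 0) (hAdef : A = m + μ * s) :
    N / (K * (A * g)) * (m * P * c) + μ / x * (N / (K * (A * g)) * (s * (P * (c * x))))
      = N / (K * g) * c * P := by
  have hT : x * (K * (A * g)) ≠ 0 := mul_ne_zero hx (mul_ne_zero hK (mul_ne_zero hA hg))
  apply mul_right_cancel₀ hT
  field_simp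
  rw [hAdef]; ring

lemma key (μ : ℝ) (hμ : -(1/2) < μ) (x : ℝ) (hx : x ≠ 0) (c N : ℂ) (k j : ℕ) :
    N * (-1) ^ k / ((k ! : ℂ) * ((genGamma μ (j + 1) : ℝ) : ℂ)) * (((j + 1 : ℕ) : ℂ) * (c * x) ^ j * c)
      + ((μ / x : ℝ) : ℂ) * (N * (-1) ^ k / ((k ! : ℂ) * ((genGamma μ (j + 1) : ℝ) : ℂ))
          * ((c * x) ^ (j + 1) - (-1) ^ (j + 1) * (c * x) ^ (j + 1)))
      = N * (-1) ^ k / ((k ! : ℂ) * ((genGamma μ j : ℝ) : ℂ)) * c * (c * x) ^ j := by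
  have hkf : (k ! : ℂ) ≠ 0 := Nat.cast_ne_zero.mpr (Nat.factorial_ne_zero k)
  have hg : ((genGamma μ j : ℝ) : ℂ) ≠ 0 := by
    exact_mod_cast (genGamma_pos μ hμ j).ne'
  have hxc : (x : ℂ) ≠ 0 := Complex.ofReal_ne_zero.mpr hx
  rw [genGamma]
  rcases Nat.even_or_odd j with hj | hj
  · have h2 : (j + 1) % 2 = 1 := by
      have := hj.two_dvd
      omega
    have hpow : (-1 : ℂ) ^ (j + 1) = -1 := (hj.add_one).neg_one_pow
    rw [if_pos h2, hpow]
    have hA : ((j : ℝ) + 1 + 2 * μ * 1 : ℝ) ≠ 0 := by nlinarith [Nat.cast_nonneg (α := ℝ) j]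
    push_cast
    have hAc : ((j : ℂ) + 1 + 2 * μ * 1) ≠ 0 := by exact_mod_cast hA
    have e2 : (c * (x : ℂ)) ^ (j + 1) - -1 * (c * (x : ℂ)) ^ (j + 1)
        = 2 * ((c * (x : ℂ)) ^ j * (c * (x : ℂ))) := by ring
    rw [e2]
    exact cancel_lemma _ _ _ _ _ _ _ _ _ _ hAc hg hkf hxc (by ring)
  · have h2 : ¬ (j + 1) % 2 = 1 := by
      have := hj.add_one.two_dvd
      omega
    have hpow : (-1 : ℂ) ^ (j + 1) = 1 := (hj.add_one).neg_one_pow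
    rw [if_neg h2, hpow]
    have hA : ((j : ℝ) + 1 + 2 * μ * 0 : ℝ) ≠ 0 := by simp only [mul_zero, add_zero]; positivity
    push_cast
    have hAc : ((j : ℂ) + 1 + 2 * μ * 0) ≠ 0 := by exact_mod_cast hA
    have e2 : (c * (x : ℂ)) ^ (j + 1) - 1 * (c * (x : ℂ)) ^ (j + 1)
        = 0 * ((c * (x : ℂ)) ^ j * (c * (x : ℂ))) := by ring
    rw [e2]
    exact cancel_lemma _ _ _ _ _ _ _ _ _ _ hAc hg hkf hxc (by ring)

lemma key2 (μ : ℝ) (hμ : -(1/2) < μ) (x : ℝ) (hx : x ≠ 0) (c N : ℂ) (k m : ℕ) (hm : 1 ≤ m) :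
    N * (-1) ^ k / ((k ! : ℂ) * ((genGamma μ m : ℝ) : ℂ)) * ((m : ℂ) * (c * x) ^ (m - 1) * c)
      + ((μ / x : ℝ) : ℂ) * (N * (-1) ^ k / ((k ! : ℂ) * ((genGamma μ m : ℝ) : ℂ)) * (c * (x : ℂ)) ^ m
          - N * (-1) ^ k / ((k ! : ℂ) * ((genGamma μ m : ℝ) : ℂ)) * (c * ((-x : ℝ) : ℂ)) ^ m)
      = N * (-1) ^ k / ((k ! : ℂ) * ((genGamma μ (m - 1) : ℝ) : ℂ)) * c * (c * x) ^ (m - 1) := by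
  obtain ⟨j, rfl⟩ : ∃ j, m = j + 1 := ⟨m - 1, by omega⟩
  have h1 : (c * ((-x : ℝ) : ℂ)) ^ (j + 1) = (-1) ^ (j + 1) * (c * (x : ℂ)) ^ (j + 1) := by
    rw [Complex.ofReal_neg, mul_neg, neg_pow]
  rw [h1]
  have h2 : N * (-1) ^ k / ((k ! : ℂ) * ((genGamma μ (j + 1) : ℝ) : ℂ)) * (c * (x : ℂ)) ^ (j + 1)
      - N * (-1) ^ k / ((k ! : ℂ) * ((genGamma μ (j + 1) : ℝ) : ℂ))
          * ((-1) ^ (j + 1) * (c * (x : ℂ)) ^ (j + 1))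
      = N * (-1) ^ k / ((k ! : ℂ) * ((genGamma μ (j + 1) : ℝ) : ℂ))
          * ((c * (x : ℂ)) ^ (j + 1) - (-1) ^ (j + 1) * (c * (x : ℂ)) ^ (j + 1)) := by ring
  rw [h2]
  simpa using key μ hμ x hx c N k j


/-- For `μ > -1/2`, `λ ∈ ℂ`, `n ≥ 1` and `f(x) = H_n^μ(λx)`:
for every `x ≠ 0`, `(D_μ f)(x) = 2λn H_{n-1}^μ(λx)`. -/
theorem dunkl_genHermite (μ : ℝ) (hμ : -(1/2) < μ) (lam : ℂ) (n : ℕ) (hn : 1 ≤ n)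
    (x : ℝ) (hx : x ≠ 0) :
    dunkl μ (fun y : ℝ => genHermite μ n (lam * y)) x
      = 2 * lam * n * genHermite μ (n - 1) (lam * x) := by
  set c : ℂ := 2 * lam with hc
  have hf : ∀ y : ℝ, genHermite μ n (lam * y)
      = ∑ k ∈ Finset.range (n / 2 + 1),
          (n ! : ℂ) * (-1) ^ k / ((k ! : ℂ) * ((genGamma μ (n - 2 * k) : ℝ) : ℂ))
            * (c * y) ^ (n - 2 * k) := by
    intro y
    rw [genHermite, Finset.mul_sum]
    refine Finset.sum_congr rfl fun k _ => ?_
    rw [show (2 : ℂ) * (lam * y) = c * y by rw [hc]; ring]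
    ring
  have hder : HasDerivAt (fun y : ℝ => genHermite μ n (lam * y))
      (∑ k ∈ Finset.range (n / 2 + 1),
        (n ! : ℂ) * (-1) ^ k / ((k ! : ℂ) * ((genGamma μ (n - 2 * k) : ℝ) : ℂ))
          * (((n - 2 * k : ℕ) : ℂ) * (c * x) ^ (n - 2 * k - 1) * c)) x := by
    have hfe : (fun y : ℝ => genHermite μ n (lam * y))
        = fun y : ℝ => ∑ k ∈ Finset.range (n / 2 + 1),
            (n ! : ℂ) * (-1) ^ k / ((k ! : ℂ) * ((genGamma μ (n - 2 * k) : ℝ) : ℂ))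
              * (c * y) ^ (n - 2 * k) := funext hf
    rw [hfe]
    exact HasDerivAt.fun_sum fun k _ => (hasDerivAt_monomial c _ x).const_mul _
  rw [dunkl, hder.deriv, hf x, hf (-x), ← Finset.sum_sub_distrib, Finset.mul_sum,
    ← Finset.sum_add_distrib]
  rw [genHermite, ← mul_assoc, Finset.mul_sum]
  have hrhs : ∀ k, 2 * lam * (n : ℂ) * (((n - 1)! : ℂ))
        * ((-1) ^ k * (2 * (lam * x)) ^ (n - 1 - 2 * k)
            / ((k ! : ℂ) * ((genGamma μ (n - 1 - 2 * k) : ℝ) : ℂ)))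
      = (n ! : ℂ) * (-1) ^ k / ((k ! : ℂ) * ((genGamma μ (n - 1 - 2 * k) : ℝ) : ℂ))
          * c * (c * x) ^ (n - 1 - 2 * k) := by
    intro k
    have hfac : (n : ℂ) * ((n - 1)! : ℂ) = (n ! : ℂ) := by
      exact_mod_cast congrArg (Nat.cast : ℕ → ℂ) (Nat.mul_factorial_pred (by omega))
    rw [show (2 : ℂ) * (lam * x) = c * x by rw [hc]; ring, ← hfac]
    ring
  have hterm : ∀ k, 2 * k + 1 ≤ n →
      (n ! : ℂ) * (-1) ^ k / ((k ! : ℂ) * ((genGamma μ (n - 2 * k) : ℝ) : ℂ))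
          * (((n - 2 * k : ℕ) : ℂ) * (c * x) ^ (n - 2 * k - 1) * c)
        + ((μ / x : ℝ) : ℂ) * ((n ! : ℂ) * (-1) ^ k / ((k ! : ℂ) * ((genGamma μ (n - 2 * k) : ℝ) : ℂ))
              * (c * (x : ℝ)) ^ (n - 2 * k)
            - (n ! : ℂ) * (-1) ^ k / ((k ! : ℂ) * ((genGamma μ (n - 2 * k) : ℝ) : ℂ))
              * (c * ((-x : ℝ) : ℂ)) ^ (n - 2 * k))
      = (n ! : ℂ) * (-1) ^ k / ((k ! : ℂ) * ((genGamma μ (n - 1 - 2 * k) : ℝ) : ℂ))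
          * c * (c * x) ^ (n - 1 - 2 * k) := by
    intro k hk
    have e1 : n - 2 * k - 1 = n - 1 - 2 * k := by omega
    rw [key2 μ hμ x hx c ((n ! : ℂ)) k (n - 2 * k) (by omega), e1]
  rcases Nat.even_or_odd n with he | ho
  · obtain ⟨t, rfl⟩ := he
    have ht : 1 ≤ t := by omega
    have e1 : (t + t) / 2 + 1 = t + 1 := by omega
    have e2 : (t + t - 1) / 2 + 1 = t := by omega
    rw [e1, e2, Finset.sum_range_succ]
    have e3 : t + t - 2 * t = 0 := by omega
    rw [e3]
    simp only [pow_zero, Nat.cast_zero, zero_mul, mul_one, sub_self, mul_zero, add_zero]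
    refine Finset.sum_congr rfl fun k hk => ?_
    have hk' : 2 * k + 1 ≤ t + t := by
      have := Finset.mem_range.mp hk; omega
    rw [hterm k hk', hrhs k]
  · obtain ⟨t, rfl⟩ := ho
    have e1 : (2 * t + 1 - 1) / 2 + 1 = (2 * t + 1) / 2 + 1 := by omega
    rw [e1]
    refine Finset.sum_congr rfl fun k hk => ?_
    have hk' : 2 * k + 1 ≤ 2 * t + 1 := by
      have := Finset.mem_range.mp hk
      omega
    rw [hterm k hk', hrhs k]
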